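/- Assume A and B are almost periodic and the family (t_n^{(k)}) is equipotentially almost periodic. Then the sequence H : ℤ → M_q(ℂ) defined by H(n) = X(t_{n+1}, t_n) + ∫_{t_n}^{t_{n+1}} X(t_{n+1}, u) B(u) du is an almost periodic sequence. -/

import Mathlib

open scoped Matrix
open MeasureTheory Filter

attribute [local instance] Matrix.frobeniusSeminormedAddCommGroup
  Matrix.frobeniusNormedAddCommGroup Matrix.frobeniusNormedSpace
  Matrix.frobeniusNormedRing Matrix.frobeniusNormedAlgebra Matrix.frobeniusIsBoundedSMul

noncomputable section

abbrev Mat (q : ℕ) := Matrix (Fin q) (Fin q) ℂ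
abbrev Vec (q : ℕ) := EuclideanSpace ℂ (Fin q)

instance matENormed {q : ℕ} : ENormedAddMonoid (Mat q) := NormedAddGroup.toENormedAddMonoid

/-- Action of a `q × q` complex matrix on `ℂ^q` with the Euclidean norm. -/
def aMul {q : ℕ} (M : Mat q) (v : Vec q) : Vec q := Matrix.toEuclideanLin M v

/-- A set of reals is relatively dense. -/
def RelDenseR (E : Set ℝ) : Prop :=
  ∃ l : ℝ, 0 < l ∧ ∀ m : ℝ, (E ∩ Set.Icc m (m + l)).Nonempty

/-- A set of integers is relatively dense in `ℤ`. -/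
def RelDenseZ (E : Set ℤ) : Prop :=
  ∃ l : ℤ, 0 < l ∧ ∀ m : ℤ, (E ∩ Set.Icc m (m + l)).Nonempty

/-- Almost periodic (continuous) function on `ℝ`. -/
def APR {E : Type*} [NormedAddCommGroup E] (g : ℝ → E) : Prop :=
  Continuous g ∧ ∀ ε : ℝ, 0 < ε →
    RelDenseR {τ : ℝ | ∀ t : ℝ, ‖g (t + τ) - g t‖ ≤ ε}

/-- Almost periodic sequence on `ℤ`. -/
def APZ {E : Type*} [NormedAddCommGroup E] (x : ℤ → E) : Prop :=
  ∀ ε : ℝ, 0 < ε → RelDenseZ {τ : ℤ | ∀ n : ℤ, ‖x (n + τ) - x n‖ ≤ ε}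

/-- The family `t_n^{(k)} = t_{n+k} - t_n` is equipotentially almost periodic. -/
def EquiAP (ts : ℤ → ℝ) : Prop :=
  ∀ ε : ℝ, 0 < ε → RelDenseZ {T : ℤ | ∀ k n : ℤ,
    |(ts (T + n + k) - ts (T + n)) - (ts (n + k) - ts n)| ≤ ε}



section APLemmas
open Set Real
variable {E : Type*} [NormedAddCommGroup E] {g : ℝ → E}

lemma apr_bdd (hg : APR g) : ∃ M : ℝ, 0 ≤ M ∧ ∀ t, ‖g t‖ ≤ M := by
  obtain ⟨l, hl, hrd⟩ := hg.2 1 one_pos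
  obtain ⟨M0, hM0⟩ := (isCompact_Icc (a := (0:ℝ)) (b := l)).exists_bound_of_continuousOn
    hg.1.continuousOn
  refine ⟨max M0 0 + 1, by positivity, fun t => ?_⟩
  obtain ⟨τ, hτT, hτI⟩ := hrd (-t)
  have h1 : ‖g (t + τ) - g t‖ ≤ 1 := hτT t
  have h2 : t + τ ∈ Set.Icc (0:ℝ) l := by
    constructor <;> [linarith [hτI.1]; linarith [hτI.2]]
  calc ‖g t‖ ≤ ‖g (t + τ)‖ + ‖g (t + τ) - g t‖ := by
        have := norm_sub_norm_le (g (t + τ)) (g t); linarith [abs_le.mp (abs_norm_sub_norm_le (g (t+τ)) (g t))]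
    _ ≤ max M0 0 + 1 := add_le_add (le_trans (hM0 _ h2) (le_max_left _ _)) h1

lemma apr_ucont (hg : APR g) {δ : ℝ} (hδ : 0 < δ) :
    ∃ η : ℝ, 0 < η ∧ ∀ t h : ℝ, |h| ≤ η → ‖g (t + h) - g t‖ ≤ δ := by
  have hδ3 : 0 < δ/3 := by linarith
  obtain ⟨l, hl, hrd⟩ := hg.2 (δ/3) hδ3
  have hUC : UniformContinuousOn g (Set.Icc (-1) (l+1)) :=
    (isCompact_Icc).uniformContinuousOn_of_continuous hg.1.continuousOn
  rw [Metric.uniformContinuousOn_iff] at hUC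
  obtain ⟨η0, hη0, hη⟩ := hUC (δ/3) hδ3
  refine ⟨min (η0/2) 1, by positivity, fun t h hh => ?_⟩
  obtain ⟨τ, hτT, hτI⟩ := hrd (-t)
  have hmem1 : t + τ ∈ Set.Icc (-1:ℝ) (l+1) := by
    constructor <;> [linarith [hτI.1]; linarith [hτI.2]]
  have hh1 : |h| ≤ 1 := le_trans hh (min_le_right _ _)
  have hh0 : |h| < η0 := lt_of_le_of_lt (le_trans hh (min_le_left _ _)) (by linarith)
  have hmem2 : t + h + τ ∈ Set.Icc (-1:ℝ) (l+1) := by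
    rcases abs_le.mp hh1 with ⟨h1, h2⟩
    constructor <;> [linarith [hτI.1]; linarith [hτI.2]]
  have e1 : ‖g (t + h) - g (t + h + τ)‖ ≤ δ/3 := by
    have := hτT (t + h); rwa [norm_sub_rev] at this
  have e2 : ‖g (t + h + τ) - g (t + τ)‖ ≤ δ/3 := by
    have := hη _ hmem2 _ hmem1 (by rw [Real.dist_eq]; simpa using hh0)
    rw [dist_eq_norm] at this; linarith
  have e3 : ‖g (t + τ) - g t‖ ≤ δ/3 := hτT t
  calc ‖g (t + h) - g t‖ = ‖(g (t+h) - g (t+h+τ)) + (g (t+h+τ) - g (t+τ)) + (g (t+τ) - g t)‖ := by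
        congr 1; abel
    _ ≤ ‖g (t+h) - g (t+h+τ)‖ + ‖g (t+h+τ) - g (t+τ)‖ + ‖g (t+τ) - g t‖ := norm_add₃_le
    _ ≤ δ := by linarith

lemma apr_tb (hg : APR g) {δ : ℝ} (hδ : 0 < δ) :
    ∃ F : Finset ℝ, ∀ r : ℝ, ∃ ρ ∈ F, ∀ t, ‖g (t + r) - g (t + ρ)‖ ≤ δ := by
  have hδ2 : 0 < δ/2 := by linarith
  obtain ⟨l, hl, hrd⟩ := hg.2 (δ/2) hδ2
  obtain ⟨η, hη, hηp⟩ := apr_ucont hg hδ2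
  refine ⟨Finset.image (fun i : ℕ => (i : ℝ) * η) (Finset.range (⌈l/η⌉₊ + 1)), fun r => ?_⟩
  obtain ⟨τ, hτT, hτI⟩ := hrd (-r)
  set x := r + τ with hx
  have hx0 : 0 ≤ x := by have := hτI.1; simp only [hx]; linarith
  have hxl : x ≤ l := by have := hτI.2; simp only [hx]; linarith
  set i := ⌊x / η⌋₊ with hi
  have hik : i ≤ ⌈l/η⌉₊ := by
    apply le_trans (Nat.floor_le_floor (by gcongr)) (Nat.floor_le_ceil _)
  refine ⟨(i:ℝ) * η, Finset.mem_image_of_mem _ (Finset.mem_range.2 (Nat.lt_succ_of_le hik)),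
    fun t => ?_⟩
  have hfl : (i:ℝ) * η ≤ x := by
    have h1 : (i:ℝ) ≤ x/η := Nat.floor_le (by positivity)
    exact (le_div_iff₀ hη).mp h1
  have hfl2 : x < ((i:ℝ) + 1) * η := by
    have h2 : x / η < (i:ℝ) + 1 := by exact_mod_cast Nat.lt_succ_floor (x/η)
    exact (div_lt_iff₀ hη).mp h2
  have e1 : ‖g (t + r) - g (t + r + τ)‖ ≤ δ/2 := by
    have := hτT (t + r); rwa [norm_sub_rev] at this
  have e2 : ‖g (t + (i:ℝ)*η + (x - (i:ℝ)*η)) - g (t + (i:ℝ)*η)‖ ≤ δ/2 := by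
    apply hηp
    rw [abs_of_nonneg (by linarith)]; linarith
  have key : t + r + τ = t + (i:ℝ)*η + (x - (i:ℝ)*η) := by rw [hx]; ring
  calc ‖g (t + r) - g (t + (i:ℝ)*η)‖
      ≤ ‖g (t + r) - g (t + r + τ)‖ + ‖g (t + r + τ) - g (t + (i:ℝ)*η)‖ :=
        norm_sub_le_norm_sub_add_norm_sub _ _ _
    _ ≤ δ := by rw [key] at e1 ⊢; linarith

end APLemmas

section SeqLemmas
lemma seq_tb {ts : ℤ → ℝ} (hEqui : EquiAP ts) {δ : ℝ} (hδ : 0 < δ) :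
    ∃ l : ℤ, 0 < l ∧ ∀ T : ℤ, ∃ T' ∈ Finset.Icc (0:ℤ) l, ∀ n k : ℤ,
      |(ts (n + T + k) - ts (n + T)) - (ts (n + T' + k) - ts (n + T'))| ≤ δ := by
  obtain ⟨l, hl, hrd⟩ := hEqui δ hδ
  refine ⟨l, hl, fun T => ?_⟩
  obtain ⟨S, hST, hSI⟩ := hrd (-T)
  refine ⟨T + S, ?_, fun n k => ?_⟩
  · rw [Finset.mem_Icc]; rcases hSI with ⟨h1, h2⟩; omega
  · have := hST k (n + T)
    have e1 : S + (n + T) + k = n + (T + S) + k := by ring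
    have e2 : S + (n + T) = n + (T + S) := by ring
    have e3 : n + T + k = T + (n) + k := by ring
    rw [e1, e2] at this
    have : |(ts (n + (T+S) + k) - ts (n + (T+S))) - (ts (n + T + k) - ts (n + T))| ≤ δ := by
      convert this using 3 <;> ring_nf
    rw [abs_sub_comm] at this
    exact this

/-- Pigeonhole: a finite coloring with monochromatic closeness gives relative density. -/
lemma tb_to_apz {E : Type*} [NormedAddCommGroup E] (x : ℤ → E) {ε : ℝ}
    (h : ∃ (S : Type) (_ : Fintype S) (κ : ℤ → S), ∀ T T' : ℤ, κ T = κ T' →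
      ∀ n : ℤ, ‖x (n + T) - x (n + T')‖ ≤ ε) :
    RelDenseZ {τ : ℤ | ∀ n : ℤ, ‖x (n + τ) - x n‖ ≤ ε} := by
  obtain ⟨S, hS, κ, hκ⟩ := h
  set T : Set ℤ := {τ : ℤ | ∀ n : ℤ, ‖x (n + τ) - x n‖ ≤ ε} with hT
  by_contra hnd
  rw [RelDenseZ] at hnd
  push_neg at hnd
  -- gap extraction
  have gap : ∀ K : ℤ, 0 ≤ K → ∃ τ : ℤ, ∀ σ : ℤ, |σ| ≤ K → τ - σ ∉ T := by
    intro K hK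
    obtain ⟨m, hm⟩ := hnd (2*K+1) (by omega)
    rw [Set.eq_empty_iff_forall_notMem] at hm
    refine ⟨m + K, fun σ hσ hmem => ?_⟩
    exact hm (m + K - σ) ⟨hmem, by rcases abs_le.mp hσ with ⟨h1,h2⟩; constructor <;> omega⟩
  -- recursively build pairwise-bad family
  have build : ∀ k : ℕ, ∃ g : Fin k → ℤ, ∀ i j, i ≠ j → g i - g j ∉ T := by
    intro k
    induction k with
    | zero => exact ⟨Fin.elim0, fun i => i.elim0⟩
    | succ k ih =>
      obtain ⟨g, hg⟩ := ih
      classical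
      set K : ℤ := ((Finset.univ.sup (fun i : Fin k => (g i).natAbs) : ℕ) : ℤ) with hK
      have hK0 : (0:ℤ) ≤ K := Int.natCast_nonneg _
      obtain ⟨τ, hτ⟩ := gap K hK0
      have hbound : ∀ i : Fin k, |g i| ≤ K := by
        intro i
        rw [Int.abs_eq_natAbs, hK]
        exact_mod_cast Finset.le_sup (f := fun i : Fin k => (g i).natAbs) (Finset.mem_univ i)
      refine ⟨Fin.snoc g τ, fun i j hij => ?_⟩
      have hTsym : ∀ σ : ℤ, σ ∈ T → -σ ∈ T := by
        intro σ hσ n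
        have := hσ (n + -σ)
        rw [show n + -σ + σ = n by ring] at this
        rw [norm_sub_rev] at this
        exact this
      rcases Fin.eq_castSucc_or_eq_last i with ⟨i', rfl⟩ | rfl <;>
        rcases Fin.eq_castSucc_or_eq_last j with ⟨j', rfl⟩ | rfl
      · rw [Fin.snoc_castSucc, Fin.snoc_castSucc]
        exact hg i' j' (fun hc => hij (by rw [hc]))
      · rw [Fin.snoc_castSucc, Fin.snoc_last]
        intro hmem
        have := hTsym _ hmem
        rw [neg_sub] at this
        exact hτ (g i') (hbound i') this
      · rw [Fin.snoc_castSucc, Fin.snoc_last]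
        exact hτ (g j') (hbound j')
      · exact absurd rfl hij
  obtain ⟨g, hg⟩ := build (Fintype.card S + 1)
  have hcard : Fintype.card S < Fintype.card (Fin (Fintype.card S + 1)) := by simp
  obtain ⟨i, j, hij, hKij⟩ := Fintype.exists_ne_map_eq_of_card_lt (κ ∘ g) hcard
  have : g i - g j ∈ T := by
    intro n
    have := hκ (g i) (g j) hKij (n - g j)
    rw [show n - g j + g i = n + (g i - g j) by ring, show n - g j + g j = n by ring] at this
    exact this
  exact hg i j hij this

end SeqLemmas

section Analysis
open Set Real
variable {q : ℕ}
lemma gb_le {K eps d x : ℝ} (hK : 0 ≤ K) (heps : 0 ≤ eps) (hx : 0 ≤ x) :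
    gronwallBound d K eps x ≤ (d + eps * x) * exp (K * x) := by
  rcases eq_or_lt_of_le hK with h0 | hKpos
  · rw [← h0, gronwallBound_K0]
    simp only [zero_mul, exp_zero, mul_one]; rfl
  · rw [gronwallBound_of_K_ne_0 (ne_of_gt hKpos)]
    have h1 : exp (K * x) - 1 ≤ K * x * exp (K * x) := by
      have h2 := add_one_le_exp (-(K*x))
      have h3 : (0:ℝ) < exp (K * x) := exp_pos _
      have hprod : exp (-(K*x)) * exp (K*x) = 1 := by rw [← exp_add]; simp
      nlinarith [h2, h3, hprod]
    have h4 : eps / K * (exp (K * x) - 1) ≤ eps * x * exp (K * x) := by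
      rw [div_mul_eq_mul_div, div_le_iff₀ hKpos]
      calc eps * (exp (K*x) - 1) ≤ eps * (K * x * exp (K*x)) := by
            apply mul_le_mul_of_nonneg_left h1 heps
        _ = eps * x * exp (K*x) * K := by ring
    nlinarith [exp_pos (K*x)]

variable {q : ℕ}

/-- Two-sided Gronwall master lemma. -/
lemma master {f f' : ℝ → Mat q} {K eps : ℝ} (hK : 0 ≤ K) (heps : 0 ≤ eps) (s t : ℝ)
    (hf : ∀ u ∈ Set.uIcc s t, HasDerivAt f (f' u) u)
    (hb : ∀ u ∈ Set.uIcc s t, ‖f' u‖ ≤ K * ‖f u‖ + eps) :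
    ‖f t‖ ≤ (‖f s‖ + eps * |t - s|) * exp (K * |t - s|) := by
  rcases le_total s t with hst | hst
  · rw [Set.uIcc_of_le hst] at hf hb
    have := norm_le_gronwallBound_of_norm_deriv_right_le (f := f) (f' := f') (a := s) (b := t)
      (fun u hu => (hf u hu).continuousAt.continuousWithinAt)
      (fun u hu => (hf u (Set.mem_Icc_of_Ico hu)).hasDerivWithinAt)
      (le_refl _) (fun u hu => hb u (Set.mem_Icc_of_Ico hu)) t (Set.right_mem_Icc.2 hst)
    refine le_trans this ?_
    rw [abs_of_nonneg (by linarith)]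
    exact gb_le hK heps (by linarith)
  · -- reflect
    set g : ℝ → Mat q := fun u => f (2*s - u) with hg
    set g' : ℝ → Mat q := fun u => (-1 : ℝ) • f' (2*s - u) with hg'
    have hmem : ∀ u ∈ Set.Icc s (2*s - t), 2*s - u ∈ Set.uIcc s t := by
      intro u hu
      rw [Set.uIcc_of_ge hst]
      constructor <;> [linarith [hu.2]; linarith [hu.1]]
    have hgd : ∀ u ∈ Set.Icc s (2*s - t), HasDerivAt g (g' u) u := by
      intro u hu
      have h1 : HasDerivAt (fun u : ℝ => 2*s - u) (-1) u := by
        simpa using (hasDerivAt_id u).const_sub (2*s)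
      exact (hf _ (hmem u hu)).scomp u h1
    have := norm_le_gronwallBound_of_norm_deriv_right_le (f := g) (f' := g') (a := s)
      (b := 2*s - t)
      (fun u hu => (hgd u hu).continuousAt.continuousWithinAt)
      (fun u hu => (hgd u (Set.mem_Icc_of_Ico hu)).hasDerivWithinAt)
      (le_refl _)
      (fun u hu => by
        have := hb _ (hmem u (Set.mem_Icc_of_Ico hu))
        simpa [hg', norm_smul] using this)
      (2*s - t) (Set.right_mem_Icc.2 (by linarith))
    have hgs : g s = f s := by show f (2*s - s) = f s; congr 1; ring
    have hgt : g (2*s - t) = f t := by show f (2*s - (2*s - t)) = f t; congr 1; ring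
    rw [hgt, hgs] at this
    refine le_trans this ?_
    rw [abs_of_nonpos (by linarith)]
    have : (2*s - t) - s = -(t - s) := by ring
    rw [this]
    exact gb_le hK heps (by linarith)

section Core

variable {A B X : ℝ → Mat q} {MA MB Th : ℝ}
variable (hX : ∀ t : ℝ, HasDerivAt X (A t * X t) t) (hXinv : ∀ t : ℝ, IsUnit (X t))
variable (hAc : Continuous A) (hBc : Continuous B)
variable (hMA : 1 ≤ MA) (hAb : ∀ t, ‖A t‖ ≤ MA)
variable (hMB : 1 ≤ MB) (hBb : ∀ t, ‖B t‖ ≤ MB)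
variable (hTh : 1 ≤ Th)

include hX in
lemma hXcont : Continuous X := continuous_iff_continuousAt.2 fun t => (hX t).continuousAt

include hX hXinv in
lemma hXicont : Continuous fun u => (X u)⁻¹ := by
  have hXc := hXcont hX
  simp only [Matrix.nonsing_inv_eq_ringInverse]
  refine continuous_iff_continuousAt.2 fun t => ?_
  have h1 : ContinuousAt Ring.inverse (X t) := by
    have := NormedRing.inverse_continuousAt (hXinv t).unit
    rwa [(hXinv t).unit_spec] at this
  exact h1.comp hXc.continuousAt

include hXinv in
lemma Xmul_inv (s : ℝ) : X s * (X s)⁻¹ = 1 :=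
  Matrix.mul_nonsing_inv _ ((Matrix.isUnit_iff_isUnit_det _).mp (hXinv s))

include hXinv in
lemma Xinv_mul (s : ℝ) : (X s)⁻¹ * X s = 1 :=
  Matrix.nonsing_inv_mul _ ((Matrix.isUnit_iff_isUnit_det _).mp (hXinv s))

include hX in
lemma derY (c s : ℝ) (u : ℝ) :
    HasDerivAt (fun u => X (u + c) * (X (s + c))⁻¹)
      (A (u + c) * (X (u + c) * (X (s + c))⁻¹)) u := by
  have h1 : HasDerivAt (fun u : ℝ => X (u + c)) (A (u + c) * X (u + c)) u := by
    have := (hX (u + c)).scomp u ((hasDerivAt_id u).add_const c)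
    simp at this; exact this
  have := h1.mul_const ((X (s + c))⁻¹)
  simp [mul_assoc] at this; exact this

/-- The fundamental bound constant. -/
def Cb (q : ℕ) (MA Th : ℝ) : ℝ := ‖(1 : Mat q)‖ * Real.exp (MA * (Th + 3))

lemma Cb_nonneg : 0 ≤ Cb q MA Th := by
  unfold Cb; positivity

include hX hXinv hMA hAb hTh in
lemma boundXX : ∀ s t : ℝ, |t - s| ≤ Th + 3 → ‖X t * (X s)⁻¹‖ ≤ Cb q MA Th := by
  intro s t hst
  have hMA0 : (0:ℝ) ≤ MA := by linarith
  have h := master (f := fun u => X u * (X s)⁻¹)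
    (f' := fun u => A u * (X u * (X s)⁻¹)) hMA0 (le_refl 0) s t
    (fun u _ => by simpa using derY hX (c := 0) (s := s) u)
    (fun u _ => by
      rw [add_zero]
      calc ‖A u * (X u * (X s)⁻¹)‖ ≤ ‖A u‖ * ‖X u * (X s)⁻¹‖ := norm_mul_le _ _
        _ ≤ MA * ‖X u * (X s)⁻¹‖ := by
            apply mul_le_mul_of_nonneg_right (hAb u) (norm_nonneg _))
  beta_reduce at h
  rw [Xmul_inv hXinv s] at h
  refine le_trans h ?_
  rw [Cb]
  have : (0:ℝ) ≤ ‖(1 : Mat q)‖ := norm_nonneg _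
  have hexp : Real.exp (MA * |t - s|) ≤ Real.exp (MA * (Th + 3)) := by
    apply Real.exp_le_exp.2; apply mul_le_mul_of_nonneg_left hst hMA0
  calc (‖(1 : Mat q)‖ + 0 * |t - s|) * Real.exp (MA * |t - s|)
      = ‖(1 : Mat q)‖ * Real.exp (MA * |t - s|) := by ring
    _ ≤ ‖(1 : Mat q)‖ * Real.exp (MA * (Th + 3)) := mul_le_mul_of_nonneg_left hexp this

include hX hAc in
lemma ftcdiff (s a b : ℝ) :
    X b * (X s)⁻¹ - X a * (X s)⁻¹ = ∫ u in a..b, A u * (X u * (X s)⁻¹) := by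
  have hXc := hXcont hX
  exact (intervalIntegral.integral_eq_sub_of_hasDerivAt
    (fun u _ => by have h := derY hX (c := 0) (s := s) u; simp at h; exact h)
    (((hAc.mul (hXc.mul continuous_const))).intervalIntegrable a b)).symm

include hX hXinv hAc hMA hAb hTh in
lemma L2 : ∀ s t t' : ℝ, |t - s| ≤ Th + 2 → |t' - t| ≤ 1 →
    ‖X t' * (X s)⁻¹ - X t * (X s)⁻¹‖ ≤ MA * Cb q MA Th * |t' - t| := by
  intro s t t' h1 h2
  rw [ftcdiff hX hAc s t t']
  apply intervalIntegral.norm_integral_le_of_norm_le_const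
  intro u hu
  have hu' : u ∈ Set.uIcc t t' := Set.uIoc_subset_uIcc hu
  rw [Set.mem_uIcc] at hu'
  have hus : |u - s| ≤ Th + 3 := by
    rcases hu' with ⟨hl, hr⟩ | ⟨hl, hr⟩ <;> rw [abs_le] at h1 h2 ⊢ <;> constructor <;> linarith
  calc ‖A u * (X u * (X s)⁻¹)‖ ≤ ‖A u‖ * ‖X u * (X s)⁻¹‖ := norm_mul_le _ _
    _ ≤ MA * Cb q MA Th := by
        apply mul_le_mul (hAb u) (boundXX hX hXinv hMA hAb hTh s u hus) (norm_nonneg _)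
        linarith

include hX hXinv hAc hMA hAb hTh in
lemma L3 : ∀ s s' t : ℝ, |t - s| ≤ Th + 2 → |s' - s| ≤ 1 →
    ‖X t * (X s')⁻¹ - X t * (X s)⁻¹‖ ≤ MA * Cb q MA Th * Cb q MA Th * |s' - s| := by
  intro s s' t h1 h2
  have key : X t * (X s')⁻¹ - X t * (X s)⁻¹
      = (X t * (X s')⁻¹) * (X s * (X s)⁻¹ - X s' * (X s)⁻¹) := by
    rw [mul_sub]
    rw [show X t * (X s')⁻¹ * (X s * (X s)⁻¹) = X t * (X s')⁻¹ by
      rw [Xmul_inv hXinv s, mul_one]]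
    rw [show X t * (X s')⁻¹ * (X s' * (X s)⁻¹) = X t * (X s)⁻¹ by
      rw [show X t * (X s')⁻¹ * (X s' * (X s)⁻¹) = X t * ((X s')⁻¹ * X s') * (X s)⁻¹ by
        noncomm_ring]
      rw [Xinv_mul hXinv s', mul_one]]
  rw [key]
  have hb1 : ‖X t * (X s')⁻¹‖ ≤ Cb q MA Th := by
    apply boundXX hX hXinv hMA hAb hTh
    rw [abs_le] at h1 h2 ⊢; constructor <;> linarith
  have hb2 : ‖X s * (X s)⁻¹ - X s' * (X s)⁻¹‖ ≤ MA * Cb q MA Th * |s' - s| := by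
    rw [norm_sub_rev]
    apply L2 hX hXinv hAc hMA hAb hTh s s s' (by simp; linarith) h2
  calc ‖X t * (X s')⁻¹ * (X s * (X s)⁻¹ - X s' * (X s)⁻¹)‖
      ≤ ‖X t * (X s')⁻¹‖ * ‖X s * (X s)⁻¹ - X s' * (X s)⁻¹‖ := norm_mul_le _ _
    _ ≤ Cb q MA Th * (MA * Cb q MA Th * |s' - s|) := by
        apply mul_le_mul hb1 hb2 (norm_nonneg _) (Cb_nonneg)
    _ = MA * Cb q MA Th * Cb q MA Th * |s' - s| := by ring

/-- Constant for the shift estimate. -/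
def C1 (q : ℕ) (MA Th : ℝ) : ℝ := Cb q MA Th * (Th + 2) * Real.exp (MA * (Th + 2))

lemma C1_nonneg (hTh : 1 ≤ Th) : 0 ≤ C1 q MA Th := by
  unfold C1
  apply mul_nonneg (mul_nonneg (Cb_nonneg) (by linarith)) (le_of_lt (Real.exp_pos _))

include hX hXinv hMA hAb hTh in
lemma L1 : ∀ (c δ s t : ℝ), 0 ≤ δ → (∀ u, ‖A (u + c) - A u‖ ≤ δ) → |t - s| ≤ Th + 2 →
    ‖X (t + c) * (X (s + c))⁻¹ - X t * (X s)⁻¹‖ ≤ δ * C1 q MA Th := by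
  intro c δ s t hδ hAshift hst
  have hMA0 : (0:ℝ) ≤ MA := by linarith
  set Y2 : ℝ → Mat q := fun u => X (u + c) * (X (s + c))⁻¹ with hY2
  set Y1 : ℝ → Mat q := fun u => X u * (X s)⁻¹ with hY1
  have hder : ∀ u, HasDerivAt (fun u => Y2 u - Y1 u)
      (A u * (Y2 u - Y1 u) + (A (u + c) - A u) * Y2 u) u := by
    intro u
    have h2 := derY hX c s u
    have h1 := by simpa using derY hX (c := 0) (s := s) u
    have := h2.sub h1
    have this' : HasDerivAt (fun u => Y2 u - Y1 u)
        (A (u + c) * (X (u + c) * (X (s + c))⁻¹) - A u * (X u * (X s)⁻¹)) u := this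
    convert this' using 1
    noncomm_ring
  have hb : ∀ u ∈ Set.uIcc s t, ‖A u * (Y2 u - Y1 u) + (A (u + c) - A u) * Y2 u‖
      ≤ MA * ‖Y2 u - Y1 u‖ + δ * Cb q MA Th := by
    intro u hu
    have huIcc : |u - s| ≤ Th + 2 := by
      rw [Set.mem_uIcc] at hu
      rcases hu with ⟨hl, hr⟩ | ⟨hl, hr⟩ <;> rw [abs_le] at hst ⊢ <;> constructor <;> linarith
    have hY2b : ‖Y2 u‖ ≤ Cb q MA Th := by
      apply boundXX hX hXinv hMA hAb hTh
      rw [show u + c - (s + c) = u - s by ring]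
      linarith [huIcc]
    calc ‖A u * (Y2 u - Y1 u) + (A (u + c) - A u) * Y2 u‖
        ≤ ‖A u * (Y2 u - Y1 u)‖ + ‖(A (u + c) - A u) * Y2 u‖ := norm_add_le _ _
      _ ≤ MA * ‖Y2 u - Y1 u‖ + δ * Cb q MA Th := by
          apply add_le_add
          · exact le_trans (norm_mul_le _ _)
              (mul_le_mul_of_nonneg_right (hAb u) (norm_nonneg _) |>.trans_eq rfl |>.trans
                (le_refl _))
          · exact le_trans (norm_mul_le _ _)
              (mul_le_mul (hAshift u) hY2b (norm_nonneg _) hδ)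
  have h := master hMA0 (mul_nonneg hδ Cb_nonneg) s t (fun u _ => hder u) hb
  have hfs : Y2 s - Y1 s = 0 := by
    rw [hY2, hY1]
    simp only [Xmul_inv hXinv]
    simp
  rw [hfs] at h
  simp only [norm_zero, zero_add] at h
  refine le_trans h ?_
  have e1 : Real.exp (MA * |t - s|) ≤ Real.exp (MA * (Th + 2)) :=
    Real.exp_le_exp.2 (mul_le_mul_of_nonneg_left hst hMA0)
  have e2 : δ * Cb q MA Th * |t - s| ≤ δ * Cb q MA Th * (Th + 2) := by
    have := Cb_nonneg (q := q) (MA := MA) (Th := Th)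
    apply mul_le_mul_of_nonneg_left hst (by positivity)
  calc δ * Cb q MA Th * |t - s| * Real.exp (MA * |t - s|)
      ≤ δ * Cb q MA Th * (Th + 2) * Real.exp (MA * (Th + 2)) := by
        apply mul_le_mul e2 e1 (le_of_lt (Real.exp_pos _))
          (mul_nonneg (mul_nonneg hδ Cb_nonneg) (by linarith))
    _ = δ * C1 q MA Th := by rw [C1]; ring

lemma uIcc_abs {a b t u r : ℝ} (hu : u ∈ Set.uIcc a b) (h1 : |a - t| ≤ r) (h2 : |b - t| ≤ r) :
    |u - t| ≤ r := by
  rw [Set.mem_uIcc] at hu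
  rcases hu with ⟨hl, hr⟩ | ⟨hl, hr⟩ <;> rw [abs_le] at h1 h2 ⊢ <;> constructor <;> linarith

include hX hXinv hBc in
lemma intg_cont (t : ℝ) : Continuous fun u => X t * (X u)⁻¹ * B u :=
  (continuous_const.mul (hXicont hX hXinv)).mul hBc

include hX hXinv hMA hAb hMB hBb hTh in
lemma intg_bdd : ∀ t u : ℝ, |u - t| ≤ Th + 3 →
    ‖X t * (X u)⁻¹ * B u‖ ≤ Cb q MA Th * MB := by
  intro t u hut
  have hb1 : ‖X t * (X u)⁻¹‖ ≤ Cb q MA Th := by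
    apply boundXX hX hXinv hMA hAb hTh
    rw [show t - u = -(u - t) by ring, abs_neg]; exact hut
  calc ‖X t * (X u)⁻¹ * B u‖ ≤ ‖X t * (X u)⁻¹‖ * ‖B u‖ := norm_mul_le _ _
    _ ≤ Cb q MA Th * MB := mul_le_mul hb1 (hBb u) (norm_nonneg _) Cb_nonneg

include hX hXinv hAc hBc hMA hAb hMB hBb hTh in
lemma L4 : ∀ s t t' : ℝ, |t - s| ≤ Th + 2 → |t' - t| ≤ 1 →
    ‖(∫ u in s..t', X t' * (X u)⁻¹ * B u) - ∫ u in s..t, X t * (X u)⁻¹ * B u‖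
      ≤ (MA * Cb q MA Th * Cb q MA Th * MB * (Th + 3) + Cb q MA Th * MB) * |t' - t| := by
  intro s t t' h1 h2
  have hCb := Cb_nonneg (q := q) (MA := MA) (Th := Th)
  have hMA0 : (0:ℝ) ≤ MA := by linarith
  have hMB0 : (0:ℝ) ≤ MB := by linarith
  have hint : ∀ r a b : ℝ, IntervalIntegrable (fun u => X r * (X u)⁻¹ * B u) volume a b :=
    fun r a b => (intg_cont hX hXinv hBc r).intervalIntegrable a b
  have adj : (∫ u in s..t, X t * (X u)⁻¹ * B u) + (∫ u in t..t', X t * (X u)⁻¹ * B u)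
      = ∫ u in s..t', X t * (X u)⁻¹ * B u :=
    intervalIntegral.integral_add_adjacent_intervals (hint t s t) (hint t t t')
  have split : (∫ u in s..t', X t' * (X u)⁻¹ * B u) - ∫ u in s..t, X t * (X u)⁻¹ * B u
      = (∫ u in s..t', (X t' * (X u)⁻¹ * B u - X t * (X u)⁻¹ * B u))
        + ∫ u in t..t', X t * (X u)⁻¹ * B u := by
    rw [intervalIntegral.integral_sub (hint t' s t') (hint t s t'), ← adj]
    abel
  rw [split]
  have hXd : ‖X t' * (X t)⁻¹ - 1‖ ≤ MA * Cb q MA Th * |t' - t| := by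
    have := L2 hX hXinv hAc hMA hAb hTh t t t' (by simp; linarith) h2
    rwa [Xmul_inv hXinv t] at this
  have e1 : ‖∫ u in s..t', (X t' * (X u)⁻¹ * B u - X t * (X u)⁻¹ * B u)‖
      ≤ MA * Cb q MA Th * |t' - t| * (Cb q MA Th * MB) * |t' - s| := by
    apply intervalIntegral.norm_integral_le_of_norm_le_const
    intro u hu
    have hu' := Set.uIoc_subset_uIcc hu
    have hut : |u - t| ≤ Th + 3 :=
      uIcc_abs hu' (by rw [abs_sub_comm]; rw [abs_le] at h1 ⊢; constructor <;> linarith)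
        (by rw [abs_le] at h2 ⊢; constructor <;> linarith)
    have key : X t' * (X u)⁻¹ * B u - X t * (X u)⁻¹ * B u
        = (X t' * (X t)⁻¹ - 1) * (X t * (X u)⁻¹ * B u) := by
      rw [sub_mul, one_mul]
      congr 1
      rw [show X t' * (X t)⁻¹ * (X t * (X u)⁻¹ * B u)
          = X t' * ((X t)⁻¹ * X t) * ((X u)⁻¹ * B u) by noncomm_ring]
      rw [Xinv_mul hXinv t]
      noncomm_ring
    rw [key]
    calc ‖(X t' * (X t)⁻¹ - 1) * (X t * (X u)⁻¹ * B u)‖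
        ≤ ‖X t' * (X t)⁻¹ - 1‖ * ‖X t * (X u)⁻¹ * B u‖ := norm_mul_le _ _
      _ ≤ MA * Cb q MA Th * |t' - t| * (Cb q MA Th * MB) := by
          apply mul_le_mul hXd (intg_bdd hX hXinv hMA hAb hMB hBb hTh t u hut)
            (norm_nonneg _)
            (mul_nonneg (mul_nonneg hMA0 hCb) (abs_nonneg _))
  have e2 : ‖∫ u in t..t', X t * (X u)⁻¹ * B u‖ ≤ Cb q MA Th * MB * |t' - t| := by
    apply intervalIntegral.norm_integral_le_of_norm_le_const
    intro u hu
    have hu' := Set.uIoc_subset_uIcc hu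
    have hut : |u - t| ≤ Th + 3 :=
      uIcc_abs hu' (by simp; linarith) (by rw [abs_le] at h2 ⊢; constructor <;> linarith)
    exact intg_bdd hX hXinv hMA hAb hMB hBb hTh t u hut
  have hts : |t' - s| ≤ Th + 3 := by rw [abs_le] at h1 h2 ⊢; constructor <;> linarith
  calc ‖(∫ u in s..t', (X t' * (X u)⁻¹ * B u - X t * (X u)⁻¹ * B u))
        + ∫ u in t..t', X t * (X u)⁻¹ * B u‖
      ≤ ‖∫ u in s..t', (X t' * (X u)⁻¹ * B u - X t * (X u)⁻¹ * B u)‖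
        + ‖∫ u in t..t', X t * (X u)⁻¹ * B u‖ := norm_add_le _ _
    _ ≤ MA * Cb q MA Th * |t' - t| * (Cb q MA Th * MB) * |t' - s|
        + Cb q MA Th * MB * |t' - t| := add_le_add e1 e2
    _ ≤ (MA * Cb q MA Th * Cb q MA Th * MB * (Th + 3) + Cb q MA Th * MB) * |t' - t| := by
        have habs : (0:ℝ) ≤ |t' - t| := abs_nonneg _
        have hc0 : (0:ℝ) ≤ MA * Cb q MA Th * (Cb q MA Th * MB) * |t' - t| :=
          mul_nonneg (mul_nonneg (mul_nonneg hMA0 hCb) (mul_nonneg hCb hMB0)) habs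
        have key := mul_le_mul_of_nonneg_left hts hc0
        nlinarith [key]

include hX hXinv hBc hMA hAb hMB hBb hTh in
lemma L5 : ∀ s s' t : ℝ, |t - s| ≤ Th + 2 → |s' - s| ≤ 1 →
    ‖(∫ u in s'..t, X t * (X u)⁻¹ * B u) - ∫ u in s..t, X t * (X u)⁻¹ * B u‖
      ≤ Cb q MA Th * MB * |s' - s| := by
  intro s s' t h1 h2
  have hint : ∀ a b : ℝ, IntervalIntegrable (fun u => X t * (X u)⁻¹ * B u) volume a b :=
    fun a b => (intg_cont hX hXinv hBc t).intervalIntegrable a b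
  have adj : (∫ u in s'..s, X t * (X u)⁻¹ * B u) + (∫ u in s..t, X t * (X u)⁻¹ * B u)
      = ∫ u in s'..t, X t * (X u)⁻¹ * B u :=
    intervalIntegral.integral_add_adjacent_intervals (hint s' s) (hint s t)
  rw [show (∫ u in s'..t, X t * (X u)⁻¹ * B u) - ∫ u in s..t, X t * (X u)⁻¹ * B u
      = ∫ u in s'..s, X t * (X u)⁻¹ * B u by rw [← adj]; abel]
  rw [show |s' - s| = |s - s'| from abs_sub_comm _ _]
  apply intervalIntegral.norm_integral_le_of_norm_le_const
  intro u hu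
  have hu' := Set.uIoc_subset_uIcc hu
  have hut : |u - t| ≤ Th + 3 :=
    uIcc_abs hu' (by rw [abs_le] at h1 h2 ⊢; constructor <;> linarith)
      (by rw [abs_sub_comm]; rw [abs_le] at h1 ⊢; constructor <;> linarith)
  exact intg_bdd hX hXinv hMA hAb hMB hBb hTh t u hut

include hX hXinv hAc hBc hMA hAb hMB hBb hTh in
lemma L6 : ∀ (c δ s t : ℝ), 0 ≤ δ → (∀ u, ‖A (u + c) - A u‖ ≤ δ) →
    (∀ u, ‖B (u + c) - B u‖ ≤ δ) → |t - s| ≤ Th + 2 →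
    ‖(∫ u in (s+c)..(t+c), X (t+c) * (X u)⁻¹ * B u) - ∫ u in s..t, X t * (X u)⁻¹ * B u‖
      ≤ (C1 q MA Th * MB + Cb q MA Th) * δ * (Th + 2) := by
  intro c δ s t hδ hAs hBs hst
  have hCb := Cb_nonneg (q := q) (MA := MA) (Th := Th)
  have hC1 := C1_nonneg (q := q) (MA := MA) (Th := Th) hTh
  have hMB0 : (0:ℝ) ≤ MB := by linarith
  have hsub : (∫ u in (s+c)..(t+c), X (t+c) * (X u)⁻¹ * B u)
      = ∫ u in s..t, X (t+c) * (X (u+c))⁻¹ * B (u+c) := by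
    rw [intervalIntegral.integral_comp_add_right (fun u => X (t+c) * (X u)⁻¹ * B u) c]
  rw [hsub]
  have hint1 : IntervalIntegrable (fun u => X (t+c) * (X (u+c))⁻¹ * B (u+c)) volume s t := by
    apply Continuous.intervalIntegrable
    exact (intg_cont hX hXinv hBc (t+c)).comp (continuous_add_right c)
  have hint2 : IntervalIntegrable (fun u => X t * (X u)⁻¹ * B u) volume s t :=
    (intg_cont hX hXinv hBc t).intervalIntegrable s t
  rw [← intervalIntegral.integral_sub hint1 hint2]
  apply le_trans (intervalIntegral.norm_integral_le_of_norm_le_const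
    (C := (C1 q MA Th * MB + Cb q MA Th) * δ) ?_) ?_
  · intro u hu
    have hu' := Set.uIoc_subset_uIcc hu
    have hut : |u - t| ≤ Th + 2 :=
      uIcc_abs hu' (by rw [abs_sub_comm]; exact hst) (by simp; linarith)
    have key : X (t+c) * (X (u+c))⁻¹ * B (u+c) - X t * (X u)⁻¹ * B u
        = (X (t+c) * (X (u+c))⁻¹ - X t * (X u)⁻¹) * B (u+c)
          + (X t * (X u)⁻¹) * (B (u+c) - B u) := by noncomm_ring
    rw [key]
    have hL1 : ‖X (t+c) * (X (u+c))⁻¹ - X t * (X u)⁻¹‖ ≤ δ * C1 q MA Th := by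
      apply L1 hX hXinv hMA hAb hTh c δ u t hδ hAs
      rw [abs_sub_comm]; exact hut
    have hXb : ‖X t * (X u)⁻¹‖ ≤ Cb q MA Th := by
      apply boundXX hX hXinv hMA hAb hTh
      rw [abs_sub_comm] at hut; rw [abs_le] at hut ⊢; constructor <;> linarith
    calc ‖(X (t+c) * (X (u+c))⁻¹ - X t * (X u)⁻¹) * B (u+c)
          + (X t * (X u)⁻¹) * (B (u+c) - B u)‖
        ≤ ‖(X (t+c) * (X (u+c))⁻¹ - X t * (X u)⁻¹) * B (u+c)‖
          + ‖(X t * (X u)⁻¹) * (B (u+c) - B u)‖ := norm_add_le _ _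
      _ ≤ δ * C1 q MA Th * MB + Cb q MA Th * δ := by
          apply add_le_add
          · exact le_trans (norm_mul_le _ _)
              (mul_le_mul hL1 (hBb (u+c)) (norm_nonneg _) (mul_nonneg hδ hC1))
          · exact le_trans (norm_mul_le _ _)
              (mul_le_mul hXb (hBs u) (norm_nonneg _) hCb)
      _ = (C1 q MA Th * MB + Cb q MA Th) * δ := by ring
  · have : |t - s| ≤ Th + 2 := hst
    have h0 : (0:ℝ) ≤ (C1 q MA Th * MB + Cb q MA Th) * δ :=
      mul_nonneg (by nlinarith) hδ
    nlinarith [abs_nonneg (t - s)]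

/-- The local propagator plus forced term. -/
def Phi (X B : ℝ → Mat q) (s t : ℝ) : Mat q :=
  X t * (X s)⁻¹ + ∫ u in s..t, X t * (X u)⁻¹ * B u

/-- The master constant. -/
def C0 (q : ℕ) (MA MB Th : ℝ) : ℝ :=
  (MA * Cb q MA Th * Cb q MA Th + Cb q MA Th * MB)
  + (MA * Cb q MA Th + (MA * Cb q MA Th * Cb q MA Th * MB * (Th + 3) + Cb q MA Th * MB))
  + (C1 q MA Th + (C1 q MA Th * MB + Cb q MA Th) * (Th + 2))

include hX hXinv hAc hBc hMA hAb hMB hBb hTh in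
lemma CORE : ∀ c δ s t s' t' : ℝ, 0 < δ → δ ≤ 1 → |t - s| ≤ Th + 1 →
    |s' - (s + c)| ≤ δ → |t' - (t + c)| ≤ δ →
    (∀ u, ‖A (u + c) - A u‖ ≤ δ) → (∀ u, ‖B (u + c) - B u‖ ≤ δ) →
    ‖Phi X B s' t' - Phi X B s t‖ ≤ C0 q MA MB Th * δ := by
  intro c δ s t s' t' hδ0 hδ1 hst hs' ht' hAs hBs
  have hCb := Cb_nonneg (q := q) (MA := MA) (Th := Th)
  have hC1 := C1_nonneg (q := q) (MA := MA) (Th := Th) hTh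
  have hMA0 : (0:ℝ) ≤ MA := by linarith
  have hMB0 : (0:ℝ) ≤ MB := by linarith
  have hδ0' : (0:ℝ) ≤ δ := le_of_lt hδ0
  -- piece 1 : s' → s+c  (at endpoint t')
  have hp1a : ‖X t' * (X s')⁻¹ - X t' * (X (s+c))⁻¹‖
      ≤ MA * Cb q MA Th * Cb q MA Th * δ := by
    have h := L3 hX hXinv hAc hMA hAb hTh (s+c) s' t'
      (by rw [abs_le] at hst ht' ⊢; constructor <;> linarith)
      (le_trans hs' hδ1)
    refine le_trans h ?_
    apply mul_le_mul_of_nonneg_left hs' (mul_nonneg (mul_nonneg hMA0 hCb) hCb)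
  have hp1b : ‖(∫ u in s'..t', X t' * (X u)⁻¹ * B u)
        - ∫ u in (s+c)..t', X t' * (X u)⁻¹ * B u‖ ≤ Cb q MA Th * MB * δ := by
    have h := L5 hX hXinv hBc hMA hAb hMB hBb hTh (s+c) s' t'
      (by rw [abs_le] at hst ht' ⊢; constructor <;> linarith)
      (le_trans hs' hδ1)
    refine le_trans h ?_
    apply mul_le_mul_of_nonneg_left hs' (mul_nonneg hCb hMB0)
  -- piece 2 : t' → t+c  (at endpoint s+c)
  have hp2a : ‖X t' * (X (s+c))⁻¹ - X (t+c) * (X (s+c))⁻¹‖ ≤ MA * Cb q MA Th * δ := by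
    have h := L2 hX hXinv hAc hMA hAb hTh (s+c) (t+c) t'
      (by rw [(show t + c - (s + c) = t - s by ring)]; rw [abs_le] at hst ⊢
          constructor <;> linarith)
      (le_trans ht' hδ1)
    refine le_trans h ?_
    apply mul_le_mul_of_nonneg_left ht' (mul_nonneg hMA0 hCb)
  have hp2b : ‖(∫ u in (s+c)..t', X t' * (X u)⁻¹ * B u)
        - ∫ u in (s+c)..(t+c), X (t+c) * (X u)⁻¹ * B u‖
      ≤ (MA * Cb q MA Th * Cb q MA Th * MB * (Th + 3) + Cb q MA Th * MB) * δ := by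
    have h := L4 hX hXinv hAc hBc hMA hAb hMB hBb hTh (s+c) (t+c) t'
      (by rw [(show t + c - (s + c) = t - s by ring)]; rw [abs_le] at hst ⊢
          constructor <;> linarith)
      (le_trans ht' hδ1)
    refine le_trans h ?_
    apply mul_le_mul_of_nonneg_left ht' ?_
    have : (0:ℝ) ≤ MA * Cb q MA Th * Cb q MA Th * MB * (Th + 3) :=
      mul_nonneg (mul_nonneg (mul_nonneg (mul_nonneg hMA0 hCb) hCb) hMB0) (by linarith)
    nlinarith [mul_nonneg hCb hMB0]
  -- piece 3 : shift by c
  have hp3a : ‖X (t+c) * (X (s+c))⁻¹ - X t * (X s)⁻¹‖ ≤ δ * C1 q MA Th :=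
    L1 hX hXinv hMA hAb hTh c δ s t hδ0' hAs (by rw [abs_le] at hst ⊢; constructor <;> linarith)
  have hp3b : ‖(∫ u in (s+c)..(t+c), X (t+c) * (X u)⁻¹ * B u)
        - ∫ u in s..t, X t * (X u)⁻¹ * B u‖
      ≤ (C1 q MA Th * MB + Cb q MA Th) * δ * (Th + 2) :=
    L6 hX hXinv hAc hBc hMA hAb hMB hBb hTh c δ s t hδ0' hAs hBs
      (by rw [abs_le] at hst ⊢; constructor <;> linarith)
  -- assemble
  have deco : Phi X B s' t' - Phi X B s t
      = ((X t' * (X s')⁻¹ - X t' * (X (s+c))⁻¹)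
          + ((∫ u in s'..t', X t' * (X u)⁻¹ * B u)
            - ∫ u in (s+c)..t', X t' * (X u)⁻¹ * B u))
        + ((X t' * (X (s+c))⁻¹ - X (t+c) * (X (s+c))⁻¹)
          + ((∫ u in (s+c)..t', X t' * (X u)⁻¹ * B u)
            - ∫ u in (s+c)..(t+c), X (t+c) * (X u)⁻¹ * B u))
        + ((X (t+c) * (X (s+c))⁻¹ - X t * (X s)⁻¹)
          + ((∫ u in (s+c)..(t+c), X (t+c) * (X u)⁻¹ * B u)
            - ∫ u in s..t, X t * (X u)⁻¹ * B u)) := by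
    rw [Phi, Phi]; abel
  rw [deco]
  calc _ ≤ ‖(X t' * (X s')⁻¹ - X t' * (X (s+c))⁻¹)
          + ((∫ u in s'..t', X t' * (X u)⁻¹ * B u)
            - ∫ u in (s+c)..t', X t' * (X u)⁻¹ * B u)‖
        + ‖(X t' * (X (s+c))⁻¹ - X (t+c) * (X (s+c))⁻¹)
          + ((∫ u in (s+c)..t', X t' * (X u)⁻¹ * B u)
            - ∫ u in (s+c)..(t+c), X (t+c) * (X u)⁻¹ * B u)‖
        + ‖(X (t+c) * (X (s+c))⁻¹ - X t * (X s)⁻¹)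
          + ((∫ u in (s+c)..(t+c), X (t+c) * (X u)⁻¹ * B u)
            - ∫ u in s..t, X t * (X u)⁻¹ * B u)‖ := norm_add₃_le
    _ ≤ C0 q MA MB Th * δ := by
        have n1 := le_trans (norm_add_le _ _) (add_le_add hp1a hp1b)
        have n2 := le_trans (norm_add_le _ _) (add_le_add hp2a hp2b)
        have n3 := le_trans (norm_add_le _ _) (add_le_add hp3a hp3b)
        rw [C0]
        nlinarith [n1, n2, n3]

end Core

end Analysis

section Main
open Set Real

lemma C0_nonneg {q : ℕ} {MA MB Th : ℝ} (hMA : 1 ≤ MA) (hMB : 1 ≤ MB) (hTh : 1 ≤ Th) :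
    0 ≤ C0 q MA MB Th := by
  have hCb := Cb_nonneg (q := q) (MA := MA) (Th := Th)
  have hC1 := C1_nonneg (q := q) (MA := MA) (Th := Th) hTh
  have hMA0 : (0:ℝ) ≤ MA := by linarith
  have hMB0 : (0:ℝ) ≤ MB := by linarith
  rw [C0]
  have a1 : (0:ℝ) ≤ MA * Cb q MA Th * Cb q MA Th := mul_nonneg (mul_nonneg hMA0 hCb) hCb
  have a2 : (0:ℝ) ≤ Cb q MA Th * MB := mul_nonneg hCb hMB0
  have a3 : (0:ℝ) ≤ MA * Cb q MA Th := mul_nonneg hMA0 hCb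
  have a4 : (0:ℝ) ≤ MA * Cb q MA Th * Cb q MA Th * MB * (Th + 3) :=
    mul_nonneg (mul_nonneg a1 hMB0) (by linarith)
  have a6 : (0:ℝ) ≤ (C1 q MA Th * MB + Cb q MA Th) * (Th + 2) :=
    mul_nonneg (by nlinarith [mul_nonneg hC1 hMB0]) (by linarith)
  linarith

theorem H_is_almost_periodic' {q : ℕ} (hq : 1 ≤ q)
    (ts : ℤ → ℝ) (hts : StrictMono ts)
    (htop : Tendsto ts atTop atTop) (hbot : Tendsto ts atBot atBot)
    (hbdd : BddAbove (Set.range fun n : ℤ => ts (n + 1) - ts n))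
    (A B : ℝ → Mat q) (hA : APR A) (hB : APR B) (hEqui : EquiAP ts)
    (X : ℝ → Mat q) (hX : ∀ t : ℝ, HasDerivAt X (A t * X t) t)
    (hXinv : ∀ t : ℝ, IsUnit (X t)) :
    APZ (fun n : ℤ => X (ts (n + 1)) * (X (ts n))⁻¹ +
      ∫ u in (ts n)..(ts (n + 1)), X (ts (n + 1)) * (X u)⁻¹ * B u) := by
  classical
  -- constants
  obtain ⟨θ0, hθ0⟩ := hbdd
  set Th : ℝ := max θ0 1 with hThdef
  have hTh : 1 ≤ Th := le_max_right _ _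
  have hstep : ∀ n : ℤ, ts (n + 1) - ts n ≤ Th := by
    intro n
    refine le_trans ?_ (le_max_left _ _)
    exact hθ0 ⟨n, rfl⟩
  obtain ⟨Ma, _, hMab⟩ := apr_bdd hA
  obtain ⟨Mb, _, hMbb⟩ := apr_bdd hB
  set MA : ℝ := max Ma 1 with hMAdef
  set MB : ℝ := max Mb 1 with hMBdef
  have hMA : 1 ≤ MA := le_max_right _ _
  have hMB : 1 ≤ MB := le_max_right _ _
  have hAb : ∀ t, ‖A t‖ ≤ MA := fun t => le_trans (hMab t) (le_max_left _ _)
  have hBb : ∀ t, ‖B t‖ ≤ MB := fun t => le_trans (hMbb t) (le_max_left _ _)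
  have hAc : Continuous A := hA.1
  have hBc : Continuous B := hB.1
  set D : ℝ := C0 q MA MB Th + 1 with hDdef
  have hD1 : 1 ≤ D := by
    have := C0_nonneg (q := q) hMA hMB hTh; linarith
  have hD0 : 0 < D := by linarith
  -- main APZ proof
  intro ε hε
  set δ : ℝ := min (1/2) (ε / (2 * D)) with hδdef
  have hδ0 : 0 < δ := lt_min (by norm_num) (by positivity)
  have hδhalf : δ ≤ 1/2 := min_le_left _ _
  have hδD : δ ≤ ε / (2 * D) := min_le_right _ _
  -- nets
  obtain ⟨FA, hFA⟩ := apr_tb hA hδ0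
  obtain ⟨FB, hFB⟩ := apr_tb hB hδ0
  obtain ⟨l, hl, hseq⟩ := seq_tb hEqui hδ0
  choose ρA hρAmem hρA using hFA
  choose ρB hρBmem hρB using hFB
  choose P hPmem hP using hseq
  show RelDenseZ {τ : ℤ | ∀ n : ℤ,
    ‖(fun n : ℤ => Phi X B (ts n) (ts (n + 1))) (n + τ)
      - (fun n : ℤ => Phi X B (ts n) (ts (n + 1))) n‖ ≤ ε}
  apply tb_to_apz (x := fun n : ℤ => Phi X B (ts n) (ts (n + 1)))
  refine ⟨({x // x ∈ Finset.Icc (0:ℤ) l} × {x // x ∈ FA} × {x // x ∈ FB}), inferInstance,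
    fun T => ⟨⟨P T, hPmem T⟩, ⟨ρA (ts T), hρAmem (ts T)⟩, ⟨ρB (ts T), hρBmem (ts T)⟩⟩,
    fun T T' hTT n => ?_⟩
  simp only [Prod.mk.injEq, Subtype.mk.injEq] at hTT
  obtain ⟨hPeq, hAeq, hBeq⟩ := hTT
  set c : ℝ := ts T - ts T' with hcdef
  -- shift bounds
  have hAshift : ∀ u : ℝ, ‖A (u + c) - A u‖ ≤ 2 * δ := by
    intro u
    have h1 := hρA (ts T) (u - ts T')
    have h2 := hρB (ts T) (u - ts T')
    have h3 := hρA (ts T') (u - ts T')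
    rw [hAeq] at h1
    have e1 : u - ts T' + ts T = u + c := by rw [hcdef]; ring
    have e2 : u - ts T' + ts T' = u := by ring
    rw [e1] at h1
    rw [e2] at h3
    calc ‖A (u + c) - A u‖
        ≤ ‖A (u + c) - A (u - ts T' + ρA (ts T'))‖ + ‖A (u - ts T' + ρA (ts T')) - A u‖ := by
          exact norm_sub_le_norm_sub_add_norm_sub _ _ _
      _ ≤ δ + δ := by
          refine add_le_add h1 ?_
          rw [norm_sub_rev]; exact h3
      _ = 2 * δ := by ring
  have hBshift : ∀ u : ℝ, ‖B (u + c) - B u‖ ≤ 2 * δ := by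
    intro u
    have h1 := hρB (ts T) (u - ts T')
    have h3 := hρB (ts T') (u - ts T')
    rw [hBeq] at h1
    have e1 : u - ts T' + ts T = u + c := by rw [hcdef]; ring
    have e2 : u - ts T' + ts T' = u := by ring
    rw [e1] at h1
    rw [e2] at h3
    calc ‖B (u + c) - B u‖
        ≤ ‖B (u + c) - B (u - ts T' + ρB (ts T'))‖ + ‖B (u - ts T' + ρB (ts T')) - B u‖ :=
          norm_sub_le_norm_sub_add_norm_sub _ _ _
      _ ≤ δ + δ := by
          refine add_le_add h1 ?_
          rw [norm_sub_rev]; exact h3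
      _ = 2 * δ := by ring
  -- sequence gap bounds
  have hseq2 : ∀ k : ℤ, |ts (T + k) - ts (T' + k) - c| ≤ 2 * δ := by
    intro k
    have h1 := hP T 0 k
    have h2 := hP T' 0 k
    rw [hPeq] at h1
    have comb : |(ts (0 + T + k) - ts (0 + T)) - (ts (0 + T' + k) - ts (0 + T'))| ≤ 2 * δ := by
      calc |(ts (0 + T + k) - ts (0 + T)) - (ts (0 + T' + k) - ts (0 + T'))|
          ≤ |(ts (0 + T + k) - ts (0 + T)) - (ts (0 + P T' + k) - ts (0 + P T'))|
            + |(ts (0 + P T' + k) - ts (0 + P T')) - (ts (0 + T' + k) - ts (0 + T'))| := by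
              exact abs_sub_le _ _ _
        _ ≤ δ + δ := by
            refine add_le_add h1 ?_
            rw [abs_sub_comm]; exact h2
        _ = 2 * δ := by ring
    have e0 : (0:ℤ) + T + k = T + k := by ring
    have e1 : (0:ℤ) + T = T := by ring
    have e2 : (0:ℤ) + T' + k = T' + k := by ring
    have e3 : (0:ℤ) + T' = T' := by ring
    rw [e0, e1, e2, e3] at comb
    have : ts (T + k) - ts T - (ts (T' + k) - ts T') = ts (T + k) - ts (T' + k) - c := by
      rw [hcdef]; ring
    rwa [this] at comb
  -- apply CORE
  have main := CORE (A := A) (B := B) (X := X) hX hXinv hAc hBc hMA hAb hMB hBb hTh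
    c (2 * δ) (ts (n + T')) (ts (n + T' + 1)) (ts (n + T)) (ts (n + T + 1))
    (by linarith) (by linarith)
    (by
      have h1 : ts (n + T') < ts (n + T' + 1) := hts (by omega)
      have h2 := hstep (n + T')
      rw [abs_le]; constructor <;> linarith)
    (by
      have := hseq2 n
      rw [show T + n = n + T by ring, show T' + n = n + T' by ring] at this
      rw [show ts (n + T) - (ts (n + T') + c) = ts (n + T) - ts (n + T') - c by ring]
      exact this)
    (by
      have := hseq2 (n + 1)
      rw [show T + (n + 1) = n + T + 1 by ring, show T' + (n + 1) = n + T' + 1 by ring] at this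
      rw [show ts (n + T + 1) - (ts (n + T' + 1) + c) = ts (n + T + 1) - ts (n + T' + 1) - c
        by ring]
      exact this)
    hAshift hBshift
  have hC0 : C0 q MA MB Th * (2 * δ) ≤ ε := by
    have h1 : C0 q MA MB Th ≤ D := by rw [hDdef]; linarith
    have h2 : C0 q MA MB Th * (2 * δ) ≤ D * (2 * δ) := by
      apply mul_le_mul_of_nonneg_right h1 (by linarith)
    have h3 : D * (2 * δ) ≤ D * (2 * (ε / (2 * D))) :=
      mul_le_mul_of_nonneg_left (by linarith) (le_of_lt hD0)
    have h4 : D * (2 * (ε / (2 * D))) = ε := by field_simp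
    linarith
  exact le_trans main hC0

end Main

/-- if `A`, `B` are almost periodic and `(t_n^{(k)})` is equipotentially
almost periodic, the sequence `H(n) = X(t_{n+1},t_n) + ∫_{t_n}^{t_{n+1}} X(t_{n+1},u) B(u) du`
is an almost periodic sequence. -/
theorem H_is_almost_periodic {q : ℕ} (hq : 1 ≤ q)
    (ts : ℤ → ℝ) (hts : StrictMono ts)
    (htop : Tendsto ts atTop atTop) (hbot : Tendsto ts atBot atBot)
    (hbdd : BddAbove (Set.range fun n : ℤ => ts (n + 1) - ts n))
    (A B : ℝ → Mat q) (hA : APR A) (hB : APR B) (hEqui : EquiAP ts)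
    (X : ℝ → Mat q) (hX : ∀ t : ℝ, HasDerivAt X (A t * X t) t)
    (hXinv : ∀ t : ℝ, IsUnit (X t)) :
    APZ (fun n : ℤ => X (ts (n + 1)) * (X (ts n))⁻¹ +
      ∫ u in (ts n)..(ts (n + 1)), X (ts (n + 1)) * (X u)⁻¹ * B u) :=
  H_is_almost_periodic' hq ts hts htop hbot hbdd A B hA hB hEqui X hX hXinv
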